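/- If σ ∈ C^n(G,A) is invariant under the action of Σ_{n+1}, then ∂σ ∈ C^{n+1}(G,A) is invariant under the action of Σ_{n+2}. Hence the symmetric cochains CS^n(G,A) = (C^n(G,A))^{Σ_{n+1}} form a subcomplex of the standard group cohomology cochain complex. -/

import Mathlib

variable {G A : Type} [Group G] [AddCommGroup A] [DistribMulAction G A]

/-- The action of the transposition `(i,i+1)` (1-indexed `i = j+1`) on `C^n(G,A)`. -/
def Tact (n : ℕ) (j : Fin n) (σ : (Fin n → G) → A) : (Fin n → G) → A :=
  fun g =>
    let g' : Fin n → G := fun i =>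
      if (i : ℕ) + 1 = (j : ℕ) then g i * g j
      else if i = j then (g j)⁻¹
      else if (i : ℕ) = (j : ℕ) + 1 then g j * g i
      else g i
    if (j : ℕ) = 0 then -(g j • σ g') else -(σ g')

/-- The standard cosimplicial face maps `d^j : C^n(G,A) → C^{n+1}(G,A)`. -/
def dmap (n : ℕ) (j : Fin (n + 2)) (σ : (Fin n → G) → A) : (Fin (n + 1) → G) → A :=
  fun g =>
    if (j : ℕ) = 0 then g 0 • σ (fun i => g i.succ)
    else if (j : ℕ) = n + 1 then σ (fun i => g i.castSucc)
    else σ (fun i =>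
      if (i : ℕ) + 1 < (j : ℕ) then g i.castSucc
      else if (i : ℕ) + 1 = (j : ℕ) then g i.castSucc * g i.succ
      else g i.succ)

/-- The group cohomology differential `∂ₙ = Σ_{j=0}^{n+1} (-1)ʲ dʲ`, i.e.
`∂ₙ(σ)(g₁,…,g_{n+1}) = g₁σ(g₂,…,g_{n+1}) - σ(g₁g₂,g₃,…,g_{n+1}) + ⋯
  + (-1)ⁿ σ(g₁,…,gₙg_{n+1}) + (-1)^{n+1} σ(g₁,…,gₙ)`. -/
def diff (n : ℕ) (σ : (Fin n → G) → A) : (Fin (n + 1) → G) → A :=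
  fun g => ∑ j : Fin (n + 2), ((-1 : ℤ) ^ (j : ℕ)) • dmap n j σ g

lemma Tact_dmap_self (n : ℕ) (j : Fin (n+1)) (σ : (Fin n → G) → A) :
    Tact (n+1) j (dmap n j.castSucc σ) = -(dmap n j.succ σ) := by
  funext g
  have hg : ∀ (a b : Fin (n+1)), (a:ℕ) = (b:ℕ) → g a = g b := fun a b h => congrArg g (Fin.ext h)
  simp only [Tact, dmap, Fin.coe_castSucc, Fin.val_succ, Pi.neg_apply, Fin.val_zero, Fin.ext_iff]
  split_ifs with h1 h2 h3 h4 h5 h6 h7 h8 h9 <;>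
    first
      | contradiction
      | omega
      | (rw [smul_inv_smul]
         refine congrArg (fun t => -σ t) (funext fun i => ?_)
         split_ifs <;>
           first
             | rfl
             | omega
             | (exact absurd i.2 (by omega))
             | (rw [mul_inv_cancel_right])
             | (rw [hg j i.castSucc (by simp only [Fin.coe_castSucc]; omega)]))
      | (refine congrArg (fun t => -σ t) (funext fun i => ?_)
         split_ifs <;>
           first
             | rfl
             | omega
             | (exact absurd i.2 (by omega))
             | (rw [mul_inv_cancel_right])
             | (rw [hg j i.castSucc (by simp only [Fin.coe_castSucc]; omega)]))

set_option maxHeartbeats 1000000 in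
lemma Tact_dmap_succ (n : ℕ) (j : Fin (n+1)) (σ : (Fin n → G) → A) :
    Tact (n+1) j (dmap n j.succ σ) = -(dmap n j.castSucc σ) := by
  funext g
  have hg : ∀ (a b : Fin (n+1)), (a:ℕ) = (b:ℕ) → g a = g b := fun a b h => congrArg g (Fin.ext h)
  simp only [Tact, dmap, Fin.coe_castSucc, Fin.val_succ, Pi.neg_apply, Fin.val_zero, Fin.ext_iff]
  split_ifs with h1 h2 h3 h4 h5 h6 h7 h8 h9 <;>
    try rw [hg j 0 (by simp only [Fin.val_zero]; omega)]
  all_goals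
    first
      | contradiction
      | omega
      | (refine congrArg (fun t => -((g 0 : G) • σ t)) (funext fun i => ?_)
         first
           | (exact absurd i.2 (by omega))
           | (split_ifs <;>
               first
                 | rfl
                 | omega
                 | (exact absurd i.2 (by omega))
                 | (rw [inv_mul_cancel_left])
                 | (rw [hg j i.succ (by simp only [Fin.val_succ]; omega)])))
      | (refine congrArg (fun t => -σ t) (funext fun i => ?_)
         first
           | (exact absurd i.2 (by omega))
           | (split_ifs <;>
               first
                 | rfl
                 | omega
                 | (exact absurd i.2 (by omega))
                 | (rw [inv_mul_cancel_left])
                 | (rw [hg j i.succ (by simp only [Fin.val_succ]; omega)])))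

set_option maxHeartbeats 1000000 in
lemma Tact_dmap_lt (n : ℕ) (j : Fin (n+1)) (j' : Fin n) (k : Fin (n+2))
    (hk : (k:ℕ) < (j:ℕ)) (hj' : (j':ℕ) + 1 = (j:ℕ)) (σ : (Fin n → G) → A) :
    Tact (n+1) j (dmap n k σ) = dmap n k (Tact n j' σ) := by
  funext g
  have hg : ∀ (a b : Fin (n+1)), (a:ℕ) = (b:ℕ) → g a = g b := fun a b h => congrArg g (Fin.ext h)
  simp only [Tact, dmap, Fin.coe_castSucc, Fin.val_succ, Pi.neg_apply, Fin.val_zero, Fin.ext_iff,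
    smul_neg, mul_smul]
  rw [hg j j'.succ (by simp only [Fin.val_succ]; omega)]
  simp only [eq_false (show ¬(j:ℕ) = 0 by omega), eq_false (show ¬(k:ℕ) = n+1 by omega),
    eq_false (show ¬(0:ℕ) = (j:ℕ) by omega), eq_false (show ¬(0:ℕ) = (j:ℕ)+1 by omega),
    if_false, if_true]
  by_cases hk0 : (k:ℕ) = 0
  · by_cases hj1 : (j':ℕ) = 0
    · simp only [eq_true hk0, eq_true hj1, eq_true (show (0:ℕ)+1 = (j:ℕ) by omega),
        if_true, if_false, smul_neg, mul_smul]
      refine congrArg (fun t => -(g 0 • g j'.succ • σ t)) (funext fun i => ?_)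
      split_ifs <;>
        first
          | rfl | omega
          | (rw [mul_inv_cancel_right]) | (rw [inv_mul_cancel_left])
          | (rw [mul_inv_cancel_left]) | (rw [inv_mul_cancel_right])
          | (rw [mul_assoc]) | (rw [← mul_assoc])
    · simp only [eq_true hk0, eq_false hj1, eq_false (show ¬(0:ℕ)+1 = (j:ℕ) by omega),
        if_true, if_false, smul_neg]
      refine congrArg (fun t => -(g 0 • σ t)) (funext fun i => ?_)
      split_ifs <;>
        first
          | rfl | omega
          | (rw [mul_inv_cancel_right]) | (rw [inv_mul_cancel_left])
          | (rw [mul_inv_cancel_left]) | (rw [inv_mul_cancel_right])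
          | (rw [mul_assoc]) | (rw [← mul_assoc])
  · have hj1 : ¬(j':ℕ) = 0 := by omega
    simp only [eq_false hk0, eq_false hj1, if_false]
    refine congrArg (fun t => -σ t) (funext fun i => ?_)
    split_ifs <;>
      first
        | rfl | omega
        | (rw [mul_inv_cancel_right]) | (rw [inv_mul_cancel_left])
        | (rw [mul_inv_cancel_left]) | (rw [inv_mul_cancel_right])
        | (rw [mul_assoc]) | (rw [← mul_assoc])

set_option maxHeartbeats 1000000 in
lemma Tact_dmap_gt (n : ℕ) (j : Fin (n+1)) (j' : Fin n) (k : Fin (n+2))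
    (hk : (j:ℕ) + 1 < (k:ℕ)) (hj' : (j':ℕ) = (j:ℕ)) (σ : (Fin n → G) → A) :
    Tact (n+1) j (dmap n k σ) = dmap n k (Tact n j' σ) := by
  funext g
  have hg : ∀ (a b : Fin (n+1)), (a:ℕ) = (b:ℕ) → g a = g b := fun a b h => congrArg g (Fin.ext h)
  simp only [Tact, dmap, Fin.coe_castSucc, Fin.val_succ, Pi.neg_apply, Fin.val_zero, Fin.ext_iff,
    smul_neg, mul_smul]
  rw [hg j j'.castSucc (by simp only [Fin.coe_castSucc]; omega)]
  simp only [eq_false (show ¬(k:ℕ) = 0 by omega), if_false, if_true]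
  by_cases hj0 : (j:ℕ) = 0 <;> by_cases hkn : (k:ℕ) = n + 1
  · simp only [eq_true hj0, eq_true hkn, eq_true (show (j':ℕ) = 0 by omega), if_true, smul_neg]
    refine congrArg (fun t => -(g j'.castSucc • σ t)) (funext fun i => ?_)
    split_ifs <;>
      first
        | rfl | omega
        | (rw [mul_inv_cancel_right]) | (rw [inv_mul_cancel_left])
        | (rw [mul_assoc]) | (rw [← mul_assoc])
  · simp only [eq_true hj0, eq_false hkn, eq_true (show (j':ℕ) = 0 by omega),
      eq_true (show (j':ℕ) + 1 < (k:ℕ) by omega), if_true, if_false, smul_neg]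
    refine congrArg (fun t => -(g j'.castSucc • σ t)) (funext fun i => ?_)
    split_ifs <;>
      first
        | rfl | omega
        | (rw [mul_inv_cancel_right]) | (rw [inv_mul_cancel_left])
        | (rw [mul_assoc]) | (rw [← mul_assoc])
  · simp only [eq_false hj0, eq_true hkn, eq_false (show ¬(j':ℕ) = 0 by omega), if_true, if_false]
    refine congrArg (fun t => -σ t) (funext fun i => ?_)
    split_ifs <;>
      first
        | rfl | omega
        | (rw [mul_inv_cancel_right]) | (rw [inv_mul_cancel_left])
        | (rw [mul_assoc]) | (rw [← mul_assoc])
  · simp only [eq_false hj0, eq_false hkn, eq_false (show ¬(j':ℕ) = 0 by omega), if_false]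
    refine congrArg (fun t => -σ t) (funext fun i => ?_)
    split_ifs <;>
      first
        | rfl | omega
        | (rw [mul_inv_cancel_right]) | (rw [inv_mul_cancel_left])
        | (rw [mul_assoc]) | (rw [← mul_assoc])

/-- If `σ ∈ C^n(G,A)` is invariant under the action of `Σ_{n+1}`, then `∂σ` is invariant
under the action of `Σ_{n+2}`; hence symmetric cochains form a subcomplex. -/
theorem differential_preserves_symmetric_cochains (n : ℕ) (σ : (Fin n → G) → A)
    (hσ : ∀ i : Fin n, Tact n i σ = σ) :
    ∀ i : Fin (n + 1), Tact (n + 1) i (diff n σ) = diff n σ := by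
  intro j
  have hcomm : ∀ (z : ℤ) (x : G) (a : A), x • z • a = z • x • a :=
    fun z x a => (DistribMulAction.toAddMonoidHom A x).map_zsmul z a
  have step1 : Tact (n+1) j (diff n σ) =
      fun g => ∑ k : Fin (n+2), ((-1:ℤ)^(k:ℕ)) • Tact (n+1) j (dmap n k σ) g := by
    funext g
    by_cases h : (j:ℕ) = 0
    · simp only [Tact, diff, eq_true h, if_true]
      rw [Finset.smul_sum]
      simp only [smul_neg, hcomm, Finset.sum_neg_distrib]
    · simp only [Tact, diff, eq_false h, if_false]
      simp only [smul_neg, Finset.sum_neg_distrib]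
  rw [step1]
  funext g
  have key : ∀ k : Fin (n+2), ((-1:ℤ)^(k:ℕ)) • Tact (n+1) j (dmap n k σ) g
      = ((-1:ℤ)^((Equiv.swap j.castSucc j.succ k : Fin (n+2)) : ℕ)) •
          dmap n (Equiv.swap j.castSucc j.succ k) σ g := by
    intro k
    by_cases h1 : (k:ℕ) < (j:ℕ)
    · rw [Equiv.swap_apply_of_ne_of_ne
        (by simp only [ne_eq, Fin.ext_iff, Fin.coe_castSucc]; omega)
        (by simp only [ne_eq, Fin.ext_iff, Fin.val_succ]; omega)]
      rw [Tact_dmap_lt n j ⟨(j:ℕ)-1, by omega⟩ k h1 (by show (j:ℕ)-1+1 = (j:ℕ); omega) σ,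
        hσ ⟨(j:ℕ)-1, by omega⟩]
    · by_cases h2 : (k:ℕ) = (j:ℕ)
      · obtain rfl : k = j.castSucc := Fin.ext (by simp only [Fin.coe_castSucc]; omega)
        rw [Equiv.swap_apply_left, Tact_dmap_self]
        simp only [Pi.neg_apply, smul_neg, Fin.coe_castSucc, Fin.val_succ, pow_succ,
          mul_neg, mul_one, neg_smul, neg_neg]
      · by_cases h3 : (k:ℕ) = (j:ℕ) + 1
        · obtain rfl : k = j.succ := Fin.ext (by simp only [Fin.val_succ]; omega)
          rw [Equiv.swap_apply_right, Tact_dmap_succ]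
          simp only [Pi.neg_apply, smul_neg, Fin.coe_castSucc, Fin.val_succ, pow_succ,
            mul_neg, mul_one, neg_smul, neg_neg]
        · have h4 : (j:ℕ) + 1 < (k:ℕ) := by omega
          rw [Equiv.swap_apply_of_ne_of_ne
            (by simp only [ne_eq, Fin.ext_iff, Fin.coe_castSucc]; omega)
            (by simp only [ne_eq, Fin.ext_iff, Fin.val_succ]; omega)]
          rw [Tact_dmap_gt n j ⟨(j:ℕ), by omega⟩ k h4 (by show (j:ℕ) = (j:ℕ); rfl) σ,
            hσ ⟨(j:ℕ), by omega⟩]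
  simp only [key]
  show (∑ k : Fin (n+2), (fun m : Fin (n+2) => ((-1:ℤ)^(m:ℕ)) • dmap n m σ g)
      (Equiv.swap j.castSucc j.succ k)) = diff n σ g
  rw [Equiv.sum_comp (Equiv.swap j.castSucc j.succ)
    (fun m : Fin (n+2) => ((-1:ℤ)^(m:ℕ)) • dmap n m σ g)]
  rfl
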